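/- Let N ≥ L ≥ 1 and let G ∈ Matrix (Fin N) (Fin L) ℂ have a singular value decomposition G = U·D·Vᴴ, with U, V unitary, D i j = σ_j if i = j and 0 otherwise, σ_j ≥ 0. Then for every positive semidefinite Σ ∈ Matrix (Fin L) (Fin L) ℂ, the determinant det(I_N + G·Σ·Gᴴ) is a nonnegative real number and satisfies det(I_N + G·Σ·Gᴴ) ≤ ∏_{i=1}^{L} (1 + σ_i² · q_i), where q_i = Re((Vᴴ·Σ·V) i i) ≥ 0 and ∑_{i=1}^{L} q_i = Re(trace Σ). -/

import Mathlib

open Matrix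
open scoped ComplexOrder

lemma psd_diag {n : Type*} [Fintype n] [DecidableEq n] {M : Matrix n n ℂ}
    (hM : M.PosSemidef) (i : n) : 0 ≤ (M i i).re ∧ (M i i).im = 0 := by
  have h := hM.dotProduct_mulVec_nonneg (Pi.single i 1)
  rw [mulVec_single_one] at h
  rw [dotProduct, Finset.sum_eq_single i (by intro b _ hb; simp [Pi.single_eq_of_ne hb])
    (by simp)] at h
  simp only [Pi.star_apply, Pi.single_eq_same, star_one, one_mul, mul_one,
    Complex.le_def, Complex.zero_re, Complex.zero_im] at h
  exact ⟨h.1, h.2.symm⟩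

lemma hadamard_psd {L : ℕ} (A : Matrix (Fin L) (Fin L) ℂ) (hA : A.PosDef) :
    A.det.im = 0 ∧ 0 ≤ A.det.re ∧ A.det.re ≤ ∏ i, (A i i).re := by
  haveI : WellFoundedLT (Fin L) := Finite.to_wellFoundedLT
  have hde : (fun a b => LinearOrder.toDecidableEq a b) = @instDecidableEqFin L := by
    funext a b; exact Subsingleton.elim _ _
  set W := LDL.lowerInv hA with hWdef
  set d := LDL.diagEntries hA with hddef
  haveI hinv : Invertible W := by
    have h := LDL.invertibleLowerInv hA; rw [hde] at h; exact h
  have hDiag : W * A * Wᴴ = Matrix.diagonal d := by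
    have h := (LDL.diag_eq_lowerInv_conj hA).symm
    rw [LDL.diag] at h
    rw [hde] at h
    exact h
  have hWdet : IsUnit W.det := Matrix.isUnit_det_of_invertible W
  set Lo : Matrix (Fin L) (Fin L) ℂ := W⁻¹ with hLodef
  have hdecomp : Lo * Matrix.diagonal d * Loᴴ = A := by
    rw [← hDiag, hLodef, conjTranspose_nonsing_inv]
    rw [Matrix.mul_assoc, Matrix.mul_assoc]
    have h2 : Wᴴ * Wᴴ⁻¹ = 1 := Matrix.mul_nonsing_inv _ (by rw [det_conjTranspose]; exact hWdet.star)
    rw [h2, mul_one, ← Matrix.mul_assoc, Matrix.nonsing_inv_mul _ hWdet, one_mul]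
  have hDpsd : (Matrix.diagonal d).PosSemidef := by
    rw [← hDiag]; exact hA.posSemidef.mul_mul_conjTranspose_same W
  have hd : ∀ j, 0 ≤ (d j).re ∧ (d j).im = 0 := by
    intro j
    have := psd_diag hDpsd j
    simpa using this
  have hdreal : ∀ j, ((d j).re : ℂ) = d j := fun j =>
    Complex.ext (by simp) (by simp [(hd j).2])
  have hW : W.BlockTriangular OrderDual.toDual := fun i j hij =>
    LDL.lowerInv_triangular hA hij
  have hLo : Lo.BlockTriangular OrderDual.toDual :=
    blockTriangular_inv_of_blockTriangular hW
  have hdetLo : Lo.det = ∏ i, Lo i i := Matrix.det_of_lowerTriangular Lo hLo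
  set r : Fin L → ℝ := fun i => Complex.normSq (Lo i i) * (d i).re with hrdef
  have hr0 : ∀ i, 0 ≤ r i := fun i =>
    mul_nonneg (Complex.normSq_nonneg _) (hd i).1
  have hdetA : A.det = ((∏ i, r i : ℝ) : ℂ) := by
    rw [← hdecomp, det_mul, det_mul, det_conjTranspose, det_diagonal, hdetLo,
      star_prod, Complex.ofReal_prod,
      ← Finset.prod_mul_distrib, ← Finset.prod_mul_distrib]
    refine Finset.prod_congr rfl fun i _ => ?_
    simp only [hrdef, ← starRingEnd_apply]
    rw [Complex.ofReal_mul, hdreal, ← Complex.mul_conj]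
    ring
  have hAii : ∀ i, (A i i).re = ∑ j, Complex.normSq (Lo i j) * (d j).re := by
    intro i
    rw [← hdecomp, mul_apply, Complex.re_sum]
    refine Finset.sum_congr rfl fun j _ => ?_
    rw [mul_apply, Finset.sum_eq_single j (by intro b _ hb; simp [diagonal_apply_ne _ hb])
      (by simp), diagonal_apply_eq, conjTranspose_apply]
    simp only [← starRingEnd_apply]
    rw [mul_comm (Lo i j) (d j), mul_assoc, Complex.mul_conj]
    simp [Complex.mul_re, mul_comm]
  have hle : ∀ i, r i ≤ (A i i).re := by
    intro i
    rw [hAii i]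
    exact Finset.single_le_sum (f := fun j => Complex.normSq (Lo i j) * (d j).re)
      (fun j _ => mul_nonneg (Complex.normSq_nonneg _) (hd j).1) (Finset.mem_univ i)
  refine ⟨by rw [hdetA]; exact Complex.ofReal_im _, ?_, ?_⟩
  · rw [hdetA, Complex.ofReal_re]
    exact Finset.prod_nonneg fun i _ => hr0 i
  · rw [hdetA, Complex.ofReal_re]
    exact Finset.prod_le_prod (fun i _ => hr0 i) (fun i _ => hle i)


/-- Hadamard-inequality step. With `G = U·D·Vᴴ` an SVD of `G` and
`Σ` positive semidefinite, setting `qᵢ = Re((Vᴴ·Σ·V)ᵢᵢ)`, the `qᵢ` are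
nonnegative with `∑ qᵢ = Re(trace Σ)`, and `det(I_N + G·Σ·Gᴴ)` is a nonnegative
real number bounded by `∏ᵢ (1 + σᵢ² qᵢ)`. -/
theorem hadamard_bound_logdet (N L : ℕ) (hL : 1 ≤ L) (hLN : L ≤ N)
    (G : Matrix (Fin N) (Fin L) ℂ)
    (U : Matrix (Fin N) (Fin N) ℂ) (hU : U ∈ Matrix.unitaryGroup (Fin N) ℂ)
    (V : Matrix (Fin L) (Fin L) ℂ) (hV : V ∈ Matrix.unitaryGroup (Fin L) ℂ)
    (σ : Fin L → ℝ) (hσ : ∀ j, 0 ≤ σ j)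
    (D : Matrix (Fin N) (Fin L) ℂ)
    (hD : ∀ (i : Fin N) (j : Fin L),
      D i j = if i.val = j.val then (σ j : ℂ) else 0)
    (hG : G = U * D * Vᴴ) :
    ∀ S : Matrix (Fin L) (Fin L) ℂ, S.PosSemidef →
      (∀ i : Fin L, 0 ≤ ((Vᴴ * S * V) i i).re) ∧
      (∑ i : Fin L, ((Vᴴ * S * V) i i).re) = S.trace.re ∧
      ((1 + G * S * Gᴴ).det).im = 0 ∧
      0 ≤ ((1 + G * S * Gᴴ).det).re ∧
      ((1 + G * S * Gᴴ).det).re ≤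
        ∏ i : Fin L, (1 + (σ i) ^ 2 * ((Vᴴ * S * V) i i).re) := by
  intro S hS
  set T : Matrix (Fin L) (Fin L) ℂ := Vᴴ * S * V with hTdef
  have hT : T.PosSemidef := hS.conjTranspose_mul_mul_same V
  -- unitary facts
  have hUU : U * Uᴴ = 1 := by
    have h := hU.2; rwa [Matrix.star_eq_conjTranspose] at h
  have hUU' : Uᴴ * U = 1 := by
    have h := hU.1; rwa [Matrix.star_eq_conjTranspose] at h
  have hVV : V * Vᴴ = 1 := by
    have h := hV.2; rwa [Matrix.star_eq_conjTranspose] at h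
  -- part 1
  refine ⟨fun i => (psd_diag hT i).1, ?_, ?_⟩
  · -- trace
    have htr : T.trace = S.trace := by
      rw [hTdef, trace_mul_cycle, hVV, one_mul]
    rw [← htr, Matrix.trace]
    simp [Matrix.diag_apply, Complex.re_sum]
  -- determinant parts
  set E : Matrix (Fin L) (Fin L) ℂ := Matrix.diagonal (fun i => (σ i : ℂ)) with hEdef
  have hDD : Dᴴ * D = E * E := by
    rw [hEdef, diagonal_mul_diagonal]
    ext j k
    rw [mul_apply]
    have hjN : (j : ℕ) < N := lt_of_lt_of_le j.2 hLN
    rw [Finset.sum_eq_single (⟨j.1, hjN⟩ : Fin N)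
      (by
        intro b _ hb
        have hbv : (b : ℕ) ≠ (j : ℕ) := fun h => hb (Fin.ext h)
        rw [conjTranspose_apply, hD, if_neg hbv, star_zero, zero_mul])
      (by simp)]
    rw [conjTranspose_apply, hD, hD]
    by_cases hjk : j = k
    · subst hjk
      simp [Complex.conj_ofReal]
    · have hv : (j : ℕ) ≠ (k : ℕ) := fun h => hjk (Fin.ext h)
      simp [hv, diagonal_apply_ne _ hjk]
  have hEH : Eᴴ = E := by
    ext i j
    rw [conjTranspose_apply, hEdef]
    by_cases h : i = j
    · subst h; simp [Complex.conj_ofReal]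
    · rw [diagonal_apply_ne _ (fun hh => h hh.symm), diagonal_apply_ne _ h, star_zero]
  have hM : (E * T * E).PosSemidef := by
    have h := hT.conjTranspose_mul_mul_same E
    rwa [hEH] at h
  have hPD : (1 + E * T * E).PosDef := Matrix.PosDef.one.add_posSemidef hM
  -- determinant equality
  have hGH : Gᴴ = V * Dᴴ * Uᴴ := by
    rw [hG]; simp only [conjTranspose_mul]; rw [conjTranspose_conjTranspose, Matrix.mul_assoc]
  have h3 : G * S * Gᴴ = U * (D * T * Dᴴ) * Uᴴ := by
    rw [hGH, hG, hTdef]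
    simp only [Matrix.mul_assoc]
  have h4 : 1 + G * S * Gᴴ = U * (1 + D * T * Dᴴ) * Uᴴ := by
    rw [h3, Matrix.mul_add, Matrix.mul_one, Matrix.add_mul, hUU]
  have h5 : (1 + G * S * Gᴴ).det = (1 + D * T * Dᴴ).det := by
    rw [h4, det_mul, det_mul, mul_comm, ← mul_assoc, ← det_mul, hUU', det_one, one_mul]
  have h6 : (1 + D * T * Dᴴ).det = (1 + E * T * E).det := by
    rw [Matrix.mul_assoc, det_one_add_mul_comm, Matrix.mul_assoc, hDD,
      ← Matrix.mul_assoc, det_one_add_mul_comm, ← Matrix.mul_assoc]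
  obtain ⟨him, hre, hbound⟩ := hadamard_psd _ hPD
  rw [h5, h6]
  refine ⟨him, hre, hbound.trans_eq ?_⟩
  refine Finset.prod_congr rfl fun i _ => ?_
  have hMii : (E * T * E) i i = ((σ i ^ 2 : ℝ) : ℂ) * T i i := by
    rw [hEdef, mul_diagonal, diagonal_mul]
    push_cast
    ring
  rw [Matrix.add_apply, one_apply_eq, hMii]
  rw [Complex.add_re, Complex.one_re, Complex.re_ofReal_mul]
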